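/- (Fundamental Inequality I) For every k ≥ 1, every x ∈ ℝ^{m×d} and every y ∈ C^⊥, the iterates of the accelerated primal-dual recursion satisfy: Φ(u^{k+1}, y) − Φ(Ax, y) + h(u^{k+1/2}) − h(x) ≤ −⟨y^{k+1} − y, u^{k+1} − Ax⟩ − (θ_k/γ) ⟨(I − (γτ/θ_k²)B)(x̂^{k+1} − x̂^k), u^{k+1} − Ax⟩ + (L_f/2) ‖u^{k+1} − x^k‖². -/

import Mathlib

/-- Frobenius inner product on real m×d matrices. -/
noncomputable def ip {m d : ℕ} (x y : Matrix (Fin m) (Fin d) ℝ) : ℝ :=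
  ∑ i, ∑ j, x i j * y i j

/-- The orthogonal complement C^⊥ = {y : 1ₘᵀ y = 0}. -/
def cPerp (m d : ℕ) : Set (Matrix (Fin m) (Fin d) ℝ) :=
  {y | ∀ j, ∑ i, y i j = 0}

/-- The Lagrangian Φ(x, y) = f(x) + ⟨y, x⟩. -/
noncomputable def lagr {m d : ℕ} (f : Matrix (Fin m) (Fin d) ℝ → ℝ)
    (x y : Matrix (Fin m) (Fin d) ℝ) : ℝ :=
  f x + ip y x

variable {m d : ℕ}

lemma ip_comm (a b : Matrix (Fin m) (Fin d) ℝ) : ip a b = ip b a := by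
  unfold ip; congr 1; ext i; congr 1; ext j; ring

lemma ip_add_left (a b c : Matrix (Fin m) (Fin d) ℝ) : ip (a + b) c = ip a c + ip b c := by
  unfold ip; rw [← Finset.sum_add_distrib]; congr 1; ext i
  rw [← Finset.sum_add_distrib]; congr 1; ext j
  simp [Matrix.add_apply, add_mul]

lemma ip_neg_left (a c : Matrix (Fin m) (Fin d) ℝ) : ip (-a) c = -ip a c := by
  unfold ip; rw [← Finset.sum_neg_distrib]; congr 1; ext i
  rw [← Finset.sum_neg_distrib]; congr 1; ext j
  simp [Matrix.neg_apply]

lemma ip_sub_left (a b c : Matrix (Fin m) (Fin d) ℝ) : ip (a - b) c = ip a c - ip b c := by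
  rw [sub_eq_add_neg, ip_add_left, ip_neg_left]; ring

lemma ip_smul_left (r : ℝ) (a c : Matrix (Fin m) (Fin d) ℝ) : ip (r • a) c = r * ip a c := by
  unfold ip; rw [Finset.mul_sum]; congr 1; ext i
  rw [Finset.mul_sum]; congr 1; ext j
  simp [Matrix.smul_apply]; ring

lemma ip_add_right (a b c : Matrix (Fin m) (Fin d) ℝ) : ip c (a + b) = ip c a + ip c b := by
  rw [ip_comm, ip_add_left, ip_comm a c, ip_comm b c]

lemma ip_sub_right (a b c : Matrix (Fin m) (Fin d) ℝ) : ip c (a - b) = ip c a - ip c b := by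
  rw [ip_comm, ip_sub_left, ip_comm a c, ip_comm b c]

lemma ip_smul_right (r : ℝ) (a c : Matrix (Fin m) (Fin d) ℝ) : ip c (r • a) = r * ip c a := by
  rw [ip_comm, ip_smul_left, ip_comm]

lemma ip_mul_symm {M : Matrix (Fin m) (Fin m) ℝ} (hM : ∀ i k, M i k = M k i)
    (a b : Matrix (Fin m) (Fin d) ℝ) : ip (M * a) b = ip a (M * b) := by
  unfold ip
  calc (∑ i, ∑ j, (M * a) i j * b i j)
      = ∑ i, ∑ k, ∑ j, M i k * a k j * b i j := by
        refine Finset.sum_congr rfl fun i _ => ?_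
        rw [Finset.sum_comm]
        refine Finset.sum_congr rfl fun j _ => ?_
        rw [Matrix.mul_apply, Finset.sum_mul]
    _ = ∑ k, ∑ i, ∑ j, M i k * a k j * b i j := Finset.sum_comm
    _ = ∑ k, ∑ j, a k j * (M * b) k j := by
        refine Finset.sum_congr rfl fun k _ => ?_
        rw [Finset.sum_comm]
        refine Finset.sum_congr rfl fun j _ => ?_
        rw [Matrix.mul_apply, Finset.mul_sum]
        refine Finset.sum_congr rfl fun i _ => ?_
        rw [hM i k]; ring

lemma ip_psd {M : Matrix (Fin m) (Fin m) ℝ} (hM : M.PosSemidef)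
    (a : Matrix (Fin m) (Fin d) ℝ) : 0 ≤ ip (M * a) a := by
  unfold ip
  rw [Finset.sum_comm]
  apply Finset.sum_nonneg
  intro j _
  have := hM.dotProduct_mulVec_nonneg (fun i => a i j)
  simpa [dotProduct, Matrix.mulVec, Matrix.mul_apply, mul_comm] using this

lemma grad_ineq (f : Matrix (Fin m) (Fin d) ℝ → ℝ)
    (gf : Matrix (Fin m) (Fin d) ℝ → Matrix (Fin m) (Fin d) ℝ)
    (hconv : ConvexOn ℝ Set.univ f)
    (hgrad : ∀ x v : Matrix (Fin m) (Fin d) ℝ,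
      HasDerivAt (fun t : ℝ => f (x + t • v)) (ip (gf x) v) 0)
    (z w : Matrix (Fin m) (Fin d) ℝ) :
    f z + ip (gf z) (w - z) ≤ f w := by
  set v := w - z with hv
  set g : ℝ → ℝ := fun t => f (z + t • v) with hg
  have key : ∀ t : ℝ, 0 < t → t ≤ 1 → g t ≤ (1 - t) * g 0 + t * g 1 := by
    intro t ht ht1
    have hpt : z + t • v = (1 - t) • (z + (0:ℝ) • v) + t • (z + (1:ℝ) • v) := by
      module
    have := hconv.2 (Set.mem_univ (z + (0:ℝ) • v)) (Set.mem_univ (z + (1:ℝ) • v))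
      (by linarith : (0:ℝ) ≤ 1 - t) ht.le (by ring)
    simpa [hg, hpt, smul_eq_mul] using this
  have hd : HasDerivAt g (ip (gf z) v) 0 := hgrad z v
  have hdw : HasDerivWithinAt g (ip (gf z) v) (Set.Ioi 0) 0 := hd.hasDerivWithinAt
  rw [hasDerivWithinAt_iff_tendsto_slope] at hdw
  have hev : ∀ᶠ t in nhdsWithin 0 (Set.Ioi (0:ℝ) \ {0}), slope g 0 t ≤ g 1 - g 0 := by
    have hmem : Set.Ioo (0:ℝ) 1 ∈ nhdsWithin (0:ℝ) (Set.Ioi (0:ℝ) \ {0}) := by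
      rw [Set.diff_singleton_eq_self (by simp)]
      exact Ioo_mem_nhdsGT_of_mem ⟨le_refl _, zero_lt_one⟩
    filter_upwards [hmem] with t ht
    have h1 := key t ht.1 ht.2.le
    rw [slope_def_field, sub_zero, div_le_iff₀ ht.1]
    nlinarith [ht.1, h1]
  have hnb : (nhdsWithin (0:ℝ) (Set.Ioi (0:ℝ) \ {0})).NeBot := by
    rw [Set.diff_singleton_eq_self (by simp)]
    exact nhdsGT_neBot 0
  have hle := le_of_tendsto hdw hev
  have : g 1 = f w := by simp [hg, hv]
  have h0 : g 0 = f z := by simp [hg]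
  linarith [hle]

open scoped MatrixOrder in
lemma ip_AmA2_nonneg {A : Matrix (Fin m) (Fin m) ℝ} (hA : A.PosSemidef)
    (hIA : ((1 : Matrix (Fin m) (Fin m) ℝ) - A).PosSemidef)
    (v : Matrix (Fin m) (Fin d) ℝ) : 0 ≤ ip ((A - A * A) * v) v := by
  set S := CFC.sqrt A with hSdef
  have hS : S * S = A := CFC.sqrt_mul_sqrt_self A hA.nonneg
  have hSp : S.PosSemidef := Matrix.nonneg_iff_posSemidef.mp (CFC.sqrt_nonneg A)
  have hSsym : ∀ i k, S i k = S k i := by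
    intro i k
    have := congrFun (congrFun hSp.1 i) k
    simpa [Matrix.conjTranspose_apply] using this.symm
  have h3 : S * ((1 : Matrix (Fin m) (Fin m) ℝ) - A) * S = A - A * A := by
    rw [← hS]; noncomm_ring
  have hfact : (A - A * A) * v = S * (((1 : Matrix (Fin m) (Fin m) ℝ) - A) * (S * v)) := by
    rw [← h3]; simp [Matrix.mul_assoc]
  rw [hfact, ip_mul_symm hSsym]
  exact ip_psd hIA _

theorem stmt_10' {m d : ℕ} (f : Matrix (Fin m) (Fin d) ℝ → ℝ)
    (gf : Matrix (Fin m) (Fin d) ℝ → Matrix (Fin m) (Fin d) ℝ)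
    (L_f : ℝ) (hLf : 0 < L_f)
    (hconv : ConvexOn ℝ Set.univ f)
    (hgrad : ∀ x v : Matrix (Fin m) (Fin d) ℝ,
      HasDerivAt (fun t : ℝ => f (x + t • v)) (ip (gf x) v) 0)
    (hsmooth : ∀ z w : Matrix (Fin m) (Fin d) ℝ,
      f w ≤ f z + ip (gf z) (w - z) + L_f / 2 * ip (w - z) (w - z))
    (A B : Matrix (Fin m) (Fin m) ℝ)
    (hA : A.PosSemidef) (hIA : ((1 : Matrix (Fin m) (Fin m) ℝ) - A).PosSemidef)
    (hA1 : ((1 : Matrix (Fin m) (Fin m) ℝ) - A).mulVec (fun _ => (1 : ℝ)) = 0)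
    (hB : B.PosSemidef) (hB1 : B.mulVec (fun _ => (1 : ℝ)) = 0)
    (γ τ : ℝ) (hγ : 0 < γ) (hτ : 0 < τ)
    (θ : ℕ → ℝ) (hθ : ∀ k ≥ 1, 0 < θ k ∧ θ k ≤ 1) (hθ1 : θ 1 = 1)
    (u uh x xh y yh : ℕ → Matrix (Fin m) (Fin d) ℝ)
    (hu1 : u 1 = x 1) (hxh1 : xh 1 = x 1) (hy1 : y 1 = 0)
    (hyh1 : yh 1 = τ • (B * x 1))
    (huh : ∀ k ≥ 1, uh k = x k - γ • (gf (x k) + yh k))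
    (hu : ∀ k ≥ 1, u (k + 1) = A * uh k)
    (hx : ∀ k ≥ 1, x (k + 1) =
      u (k + 1) + (θ (k + 1) / θ k - θ (k + 1)) • (u (k + 1) - u k))
    (hxh : ∀ k ≥ 1, xh (k + 1) =
      (1 / θ (k + 1)) • x (k + 1) + (1 - 1 / θ (k + 1)) • u (k + 1))
    (hy : ∀ k ≥ 1, y (k + 1) = y k + (τ / θ k) • (B * xh (k + 1)))
    (hyh : ∀ k ≥ 1, yh (k + 1) = y (k + 1) + (θ k / θ (k + 1)) • (y (k + 1) - y k)) :
    ∀ k ≥ 1, ∀ xx : Matrix (Fin m) (Fin d) ℝ, ∀ yy : Matrix (Fin m) (Fin d) ℝ,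
      f (u (k + 1)) + ip yy (u (k + 1)) - (f (A * xx) + ip yy (A * xx))
        + (1 / (2 * γ)) * ip ((A - A * A) * uh k) (uh k)
        - (1 / (2 * γ)) * ip ((A - A * A) * xx) xx ≤
      -(ip (y (k + 1) - yy) (u (k + 1) - A * xx))
        - (θ k / γ) *
          ip (((1 : Matrix (Fin m) (Fin m) ℝ) - (γ * τ / θ k ^ 2) • B) *
              (xh (k + 1) - xh k))
            (u (k + 1) - A * xx)
        + L_f / 2 * ip (u (k + 1) - x k) (u (k + 1) - x k) := by
  intro k hk xx yy
  have hθk : 0 < θ k := (hθ k hk).1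
  have hθk0 : θ k ≠ 0 := ne_of_gt hθk
  have hθk10 : θ (k + 1) ≠ 0 := ne_of_gt (hθ (k + 1) (by omega)).1
  have hγ0 : γ ≠ 0 := ne_of_gt hγ
  have hAsym : ∀ i j, A i j = A j i := by
    intro i j
    have := congrFun (congrFun hA.1 i) j
    simpa [Matrix.conjTranspose_apply] using this.symm
  have hAA : ∀ i j, (A * A) i j = (A * A) j i := by
    intro i j
    simp only [Matrix.mul_apply]
    refine Finset.sum_congr rfl fun l _ => ?_
    rw [hAsym i l, hAsym l j]; ring
  have hMsym : ∀ i j, (A - A * A) i j = (A - A * A) j i := by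
    intro i j
    simp only [Matrix.sub_apply]
    rw [hAsym i j, hAA i j]
  -- Step A
  have hstepA : θ k • (xh (k + 1) - xh k) = u (k + 1) - x k := by
    rcases Nat.lt_or_ge k 2 with h2 | h2
    · have hk1 : k = 1 := by omega
      subst hk1
      have hx2 : x (1 + 1) = u (1 + 1) := by
        rw [hx 1 le_rfl, hθ1]
        match_scalars <;> ring
      have hxh2 : xh (1 + 1) = u (1 + 1) := by
        rw [hxh 1 le_rfl, hx2]
        match_scalars <;> ring
      rw [hθ1, hxh2, hxh1, one_smul]
    · obtain ⟨j, hj, rfl⟩ : ∃ j, 1 ≤ j ∧ k = j + 1 := ⟨k - 1, by omega, by omega⟩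
      rw [hxh (j + 1) (by omega), hx (j + 1) (by omega), hxh j hj]
      match_scalars <;> field_simp <;> ring
  -- Step B
  have hstepB : y (k + 1) - yh k = (τ / θ k) • (B * (xh (k + 1) - xh k)) := by
    rcases Nat.lt_or_ge k 2 with h2 | h2
    · have hk1 : k = 1 := by omega
      subst hk1
      rw [hy 1 le_rfl, hy1, hyh1, hθ1, ← hxh1, Matrix.mul_sub]
      match_scalars <;> ring
    · obtain ⟨j, hj, rfl⟩ : ∃ j, 1 ≤ j ∧ k = j + 1 := ⟨k - 1, by omega, by omega⟩
      have hθj0 : θ j ≠ 0 := ne_of_gt (hθ j hj).1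
      rw [hy (j + 1) (by omega), hyh j hj, hy j hj, Matrix.mul_sub]
      match_scalars <;> field_simp <;> ring
  -- gradient rewrite
  have hgfm : γ • gf (x k) = (x k - uh k) - γ • yh k := by
    rw [huh k hk]; module
  have hgip : ∀ z : Matrix (Fin m) (Fin d) ℝ,
      ip (gf (x k)) z = (1 / γ) * ip (x k - uh k) z - ip (yh k) z := by
    intro z
    have h1 : γ * ip (gf (x k)) z = ip (x k - uh k) z - γ * ip (yh k) z := by
      rw [← ip_smul_left, hgfm, ip_sub_left, ip_smul_left]
    field_simp
    linarith [h1]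
  have hu' : u (k + 1) = A * uh k := hu k hk
  -- abbreviations as equalities between scalars
  have e_q1 : ip (y (k + 1) - yy) (u (k + 1) - A * xx)
      = ip (y (k + 1)) (u (k + 1) - A * xx) - ip yy (u (k + 1) - A * xx) :=
    ip_sub_left _ _ _
  have e_q2 : ip yy (u (k + 1)) - ip yy (A * xx) = ip yy (u (k + 1) - A * xx) :=
    (ip_sub_right _ _ _).symm
  have hsc : θ k * (γ * τ / θ k ^ 2) = γ * (τ / θ k) := by
    field_simp
  have hmat : θ k • (((1 : Matrix (Fin m) (Fin m) ℝ) - (γ * τ / θ k ^ 2) • B) *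
      (xh (k + 1) - xh k))
      = (u (k + 1) - x k) - γ • (y (k + 1) - yh k) := by
    rw [Matrix.sub_mul, Matrix.one_mul, Matrix.smul_mul, smul_sub, smul_smul, hsc,
      ← smul_smul, hstepA, ← hstepB]
  have e_q3 : (θ k / γ) * ip (((1 : Matrix (Fin m) (Fin m) ℝ) - (γ * τ / θ k ^ 2) • B) *
        (xh (k + 1) - xh k)) (u (k + 1) - A * xx)
      = (1 / γ) * ip (u (k + 1) - x k) (u (k + 1) - A * xx)
        - ip (y (k + 1)) (u (k + 1) - A * xx) + ip (yh k) (u (k + 1) - A * xx) := by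
    have h1 : θ k * ip (((1 : Matrix (Fin m) (Fin m) ℝ) - (γ * τ / θ k ^ 2) • B) *
        (xh (k + 1) - xh k)) (u (k + 1) - A * xx)
        = ip (u (k + 1) - x k) (u (k + 1) - A * xx)
          - γ * (ip (y (k + 1)) (u (k + 1) - A * xx) - ip (yh k) (u (k + 1) - A * xx)) := by
      rw [← ip_smul_left, hmat]
      simp only [ip_sub_left, ip_smul_left]
    field_simp
    linarith [h1]
  have e_q6 : ip (gf (x k)) (u (k + 1) - x k)
      = (1 / γ) * ip (x k - uh k) (u (k + 1) - x k) - ip (yh k) (u (k + 1) - x k) :=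
    hgip _
  have e_q7 : ip (gf (x k)) (A * xx - x k)
      = (1 / γ) * ip (x k - uh k) (A * xx - x k) - ip (yh k) (A * xx - x k) :=
    hgip _
  have e_q8a : ip (x k - uh k) (u (k + 1) - x k) - ip (x k - uh k) (A * xx - x k)
      = ip (x k - uh k) (u (k + 1) - A * xx) := by
    simp only [ip_sub_right]; ring
  have e_q8b : ip (yh k) (u (k + 1) - x k) - ip (yh k) (A * xx - x k)
      = ip (yh k) (u (k + 1) - A * xx) := by
    simp only [ip_sub_right]; ring
  have e_q9 : ip (x k - uh k) (u (k + 1) - A * xx)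
        + ip (u (k + 1) - x k) (u (k + 1) - A * xx)
      = ip (u (k + 1) - uh k) (u (k + 1) - A * xx) := by
    simp only [ip_sub_left]; ring
  have e_q10 : ip (u (k + 1) - uh k) (u (k + 1) - A * xx)
      = ip ((A - A * A) * uh k) xx - ip ((A - A * A) * uh k) (uh k) := by
    have h1 : u (k + 1) - uh k = (A - 1) * uh k := by
      rw [hu', Matrix.sub_mul, Matrix.one_mul]
    have h2 : u (k + 1) - A * xx = A * (uh k - xx) := by
      rw [hu', Matrix.mul_sub]
    rw [h1, h2, ← ip_mul_symm hAsym, ← Matrix.mul_assoc]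
    have h3 : A * (A - 1) * uh k = -((A - A * A) * uh k) := by
      rw [← Matrix.neg_mul]
      congr 1
      rw [Matrix.mul_sub, Matrix.mul_one, neg_sub]
    rw [h3, ip_neg_left, ip_sub_right]; ring
  have hsym2 : ip ((A - A * A) * xx) (uh k) = ip ((A - A * A) * uh k) xx := by
    rw [ip_mul_symm hMsym, ip_comm]
  have e_q11 : ip ((A - A * A) * (uh k - xx)) (uh k - xx)
      = ip ((A - A * A) * uh k) (uh k) - 2 * ip ((A - A * A) * uh k) xx
        + ip ((A - A * A) * xx) xx := by
    rw [Matrix.mul_sub, ip_sub_left, ip_sub_right, ip_sub_right, hsym2]; ring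
  have hs1 : f (u (k + 1)) ≤ f (x k) + ip (gf (x k)) (u (k + 1) - x k)
      + L_f / 2 * ip (u (k + 1) - x k) (u (k + 1) - x k) := hsmooth (x k) (u (k + 1))
  have hs2 : f (x k) + ip (gf (x k)) (A * xx - x k) ≤ f (A * xx) :=
    grad_ineq f gf hconv hgrad (x k) (A * xx)
  have hs3 : 0 ≤ (1 / (2 * γ)) * ip ((A - A * A) * (uh k - xx)) (uh k - xx) :=
    mul_nonneg (by positivity) (ip_AmA2_nonneg hA hIA _)
  have main : (-(ip (y (k + 1) - yy) (u (k + 1) - A * xx))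
        - (θ k / γ) *
          ip (((1 : Matrix (Fin m) (Fin m) ℝ) - (γ * τ / θ k ^ 2) • B) *
              (xh (k + 1) - xh k))
            (u (k + 1) - A * xx)
        + L_f / 2 * ip (u (k + 1) - x k) (u (k + 1) - x k))
      - (f (u (k + 1)) + ip yy (u (k + 1)) - (f (A * xx) + ip yy (A * xx))
        + (1 / (2 * γ)) * ip ((A - A * A) * uh k) (uh k)
        - (1 / (2 * γ)) * ip ((A - A * A) * xx) xx)
      = (f (x k) + ip (gf (x k)) (u (k + 1) - x k)
          + L_f / 2 * ip (u (k + 1) - x k) (u (k + 1) - x k) - f (u (k + 1)))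
        + (f (A * xx) - f (x k) - ip (gf (x k)) (A * xx - x k))
        + (1 / (2 * γ)) * ip ((A - A * A) * (uh k - xx)) (uh k - xx) := by
    linear_combination (-1 : ℝ) * e_q1 - e_q2 - e_q3 - e_q6 + e_q7 - (1/γ) * e_q8a
      + e_q8b - (1/γ) * e_q9 - (1/γ) * e_q10 - (1/(2*γ)) * e_q11
  linarith [main, hs1, hs2, hs3]

/-- STATEMENT 10 (Fundamental Inequality I) for the accelerated primal-dual
recursion: for every k ≥ 1, x ∈ ℝ^{m×d} and y ∈ C^⊥,
Φ(u^{k+1}, y) − Φ(Ax, y) + h(u^{k+1/2}) − h(x)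
  ≤ −⟨y^{k+1} − y, u^{k+1} − Ax⟩
    − (θ_k/γ)⟨(I − (γτ/θ_k²)B)(x̂^{k+1} − x̂^k), u^{k+1} − Ax⟩
    + (L_f/2)‖u^{k+1} − x^k‖²,
where h(z) = (1/(2γ))⟨(A − A²)z, z⟩. -/
theorem stmt_10 {m d : ℕ} (f : Matrix (Fin m) (Fin d) ℝ → ℝ)
    (gf : Matrix (Fin m) (Fin d) ℝ → Matrix (Fin m) (Fin d) ℝ)
    (L_f : ℝ) (hLf : 0 < L_f)
    (hconv : ConvexOn ℝ Set.univ f)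
    (hgrad : ∀ x v : Matrix (Fin m) (Fin d) ℝ,
      HasDerivAt (fun t : ℝ => f (x + t • v)) (ip (gf x) v) 0)
    (hsmooth : ∀ z w : Matrix (Fin m) (Fin d) ℝ,
      f w ≤ f z + ip (gf z) (w - z) + L_f / 2 * ip (w - z) (w - z))
    (A B : Matrix (Fin m) (Fin m) ℝ)
    (hA : A.PosSemidef) (hIA : ((1 : Matrix (Fin m) (Fin m) ℝ) - A).PosSemidef)
    (hA1 : ((1 : Matrix (Fin m) (Fin m) ℝ) - A).mulVec (fun _ => (1 : ℝ)) = 0)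
    (hB : B.PosSemidef) (hB1 : B.mulVec (fun _ => (1 : ℝ)) = 0)
    (γ τ : ℝ) (hγ : 0 < γ) (hτ : 0 < τ)
    (θ : ℕ → ℝ) (hθ : ∀ k ≥ 1, 0 < θ k ∧ θ k ≤ 1) (hθ1 : θ 1 = 1)
    (u uh x xh y yh : ℕ → Matrix (Fin m) (Fin d) ℝ)
    (hu1 : u 1 = x 1) (hxh1 : xh 1 = x 1) (hy1 : y 1 = 0)
    (hyh1 : yh 1 = τ • (B * x 1))
    (huh : ∀ k ≥ 1, uh k = x k - γ • (gf (x k) + yh k))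
    (hu : ∀ k ≥ 1, u (k + 1) = A * uh k)
    (hx : ∀ k ≥ 1, x (k + 1) =
      u (k + 1) + (θ (k + 1) / θ k - θ (k + 1)) • (u (k + 1) - u k))
    (hxh : ∀ k ≥ 1, xh (k + 1) =
      (1 / θ (k + 1)) • x (k + 1) + (1 - 1 / θ (k + 1)) • u (k + 1))
    (hy : ∀ k ≥ 1, y (k + 1) = y k + (τ / θ k) • (B * xh (k + 1)))
    (hyh : ∀ k ≥ 1, yh (k + 1) = y (k + 1) + (θ k / θ (k + 1)) • (y (k + 1) - y k)) :
    ∀ k ≥ 1, ∀ xx : Matrix (Fin m) (Fin d) ℝ, ∀ yy ∈ cPerp m d,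
      lagr f (u (k + 1)) yy - lagr f (A * xx) yy
        + (1 / (2 * γ)) * ip ((A - A * A) * uh k) (uh k)
        - (1 / (2 * γ)) * ip ((A - A * A) * xx) xx ≤
      -(ip (y (k + 1) - yy) (u (k + 1) - A * xx))
        - (θ k / γ) *
          ip (((1 : Matrix (Fin m) (Fin m) ℝ) - (γ * τ / θ k ^ 2) • B) *
              (xh (k + 1) - xh k))
            (u (k + 1) - A * xx)
        + L_f / 2 * ip (u (k + 1) - x k) (u (k + 1) - x k) := by
  intro k hk xx yy _
  have h := stmt_10' f gf L_f hLf hconv hgrad hsmooth A B hA hIA hA1 hB hB1 γ τ hγ hτ θ hθ hθ1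
    u uh x xh y yh hu1 hxh1 hy1 hyh1 huh hu hx hxh hy hyh k hk xx yy
  simpa [lagr] using h
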